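/- arXiv:1211.0020 — 2 statements merged into one kernel-verified Lean document; each statement's English description precedes it below -/
import Mathlib

section
/- Let q : ℚ[X] be a univariate polynomial, and let m be a positive integer that is a common multiple of the denominators of all coefficients of q. Fix an integer i. If q takes integer values at all integers, then the polynomial b ↦ q(mb + i) has all integer coefficients. -/
open Polynomial

theorem stmt6 (q : Polynomial ℚ) (m : ℤ) (hm : 0 < m)
    (hden : ∀ j : ℕ, ∃ z : ℤ, (m : ℚ) * q.coeff j = (z : ℚ))
    (i : ℤ)
    (hint : ∀ n : ℤ, ∃ z : ℤ, q.eval (n : ℚ) = (z : ℚ)) :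
    ∀ j : ℕ, ∃ z : ℤ,
      (q.comp (Polynomial.C (m : ℚ) * Polynomial.X + Polynomial.C (i : ℚ))).coeff j
        = (z : ℚ) := by
  intro j
  set p := q.comp (Polynomial.C (m : ℚ) * Polynomial.X + Polynomial.C (i : ℚ)) with hp
  -- lift C m * q to ℤ[X]
  have hlift : (Polynomial.C (m : ℚ) * q) ∈ Polynomial.lifts (Int.castRingHom ℚ) := by
    rw [Polynomial.lifts_iff_coeff_lifts]
    intro n
    obtain ⟨z, hz⟩ := hden n
    exact ⟨z, by simp [hz]⟩
  obtain ⟨Q, hQ⟩ := hlift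
  cases j with
  | zero =>
    obtain ⟨z, hz⟩ := hint i
    refine ⟨z, ?_⟩
    have : p.coeff 0 = p.eval 0 := by simp [Polynomial.coeff_zero_eq_eval_zero]
    rw [this, hp, Polynomial.eval_comp]
    simpa using hz
  | succ k =>
    set P : Polynomial ℤ := Q.comp (Polynomial.C m * Polynomial.X + Polynomial.C i) with hP
    have hmapP : P.map (Int.castRingHom ℚ) = Polynomial.C (m : ℚ) * p := by
      have hQ' : Q.map (Int.castRingHom ℚ) = Polynomial.C (m : ℚ) * q := hQ
      rw [hP, Polynomial.map_comp, hQ']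
      simp [hp, Polynomial.mul_comp]
    have key : (m : ℚ) * p.coeff (k + 1) = ((P.coeff (k + 1) : ℤ) : ℚ) := by
      have := congrArg (fun r => Polynomial.coeff r (k + 1)) hmapP
      simpa [Polynomial.coeff_map] using this.symm
    -- m divides P.coeff (k+1)
    have hdvd : (Polynomial.C m : Polynomial ℤ) ∣ P - Q.comp (Polynomial.C i) := by
      have h1 : (Polynomial.C m * Polynomial.X + Polynomial.C i : Polynomial ℤ)
          - Polynomial.C i ∣ P - Q.comp (Polynomial.C i) := by
        have h2 := Polynomial.sub_dvd_eval_sub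
          (Polynomial.C m * Polynomial.X + Polynomial.C i : Polynomial ℤ)
          (Polynomial.C i) (Q.map Polynomial.C)
        rw [hP]
        simpa only [Polynomial.comp, Polynomial.eval₂_eq_eval_map] using h2
      refine dvd_trans ?_ h1
      simp
    have hdvd' : m ∣ P.coeff (k + 1) := by
      obtain ⟨S, hS⟩ := hdvd
      have h2 := congrArg (fun r => Polynomial.coeff r (k + 1)) hS
      simp only [Polynomial.coeff_sub, Polynomial.coeff_C_mul, Polynomial.comp_C,
        Polynomial.coeff_C, if_neg (Nat.succ_ne_zero k), sub_zero] at h2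
      exact ⟨S.coeff (k + 1), h2⟩
    obtain ⟨w, hw⟩ := hdvd'
    refine ⟨w, ?_⟩
    have hm0 : (m : ℚ) ≠ 0 := by exact_mod_cast hm.ne'
    rw [hw] at key
    push_cast at key
    exact mul_left_cancel₀ hm0 key
end

section
/- The set S = {(s, s²) : s ∈ ℕ} ⊆ ℕ² cannot be written as a finite union of sets of the form P ∩ (λ + Λ), where each P is a rational polyhedron in ℝ², λ ∈ ℤ², and Λ ⊆ ℤ² is a full-rank lattice (subgroup of finite index). -/
/-- A rational polyhedron in ℝ²: a finite intersection of half-spaces with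
integral data. -/
def IsRatPolyhedron (P : Set (ℝ × ℝ)) : Prop :=
  ∃ (m : ℕ) (a : Fin m → ℤ × ℤ) (b : Fin m → ℤ),
    P = {x : ℝ × ℝ | ∀ i, ((a i).1 : ℝ) * x.1 + ((a i).2 : ℝ) * x.2 ≤ (b i : ℝ)}

theorem stmt9 :
    ¬ ∃ (k : ℕ) (P : Fin k → Set (ℝ × ℝ)) (Λ : Fin k → AddSubgroup (ℤ × ℤ))
        (lam : Fin k → ℤ × ℤ),
      (∀ i, IsRatPolyhedron (P i)) ∧
      (∀ i, (Λ i).index ≠ 0) ∧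
      {q : ℤ × ℤ | ∃ s : ℕ, q = ((s : ℤ), (s : ℤ) ^ 2)} =
        ⋃ i, {q : ℤ × ℤ | ((q.1 : ℝ), (q.2 : ℝ)) ∈ P i ∧ q - lam i ∈ Λ i} := by
  rintro ⟨k, P, Λ, lam, hP, hidx, hS⟩
  classical
  -- N : common "period"
  set N : ℕ := ∏ i, (Λ i).index with hNdef
  have hNpos : 0 < N := Finset.prod_pos fun i _ => Nat.pos_of_ne_zero (hidx i)
  have hNmem : ∀ (i : Fin k) (q : ℤ × ℤ), (N : ℤ) • q ∈ Λ i := by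
    intro i q
    obtain ⟨c, hc⟩ := Finset.dvd_prod_of_mem (fun i => (Λ i).index) (Finset.mem_univ i)
    rw [← hNdef] at hc
    have : (N : ℤ) • q = (c : ℤ) • ((Λ i).index • q) := by
      rw [natCast_zsmul, natCast_zsmul, smul_smul, hc, mul_comm]
    rw [this]
    exact zsmul_mem (AddSubgroup.nsmul_index_mem (Λ i) q) c
  -- each point (2nN, (2nN)²) lies in some piece
  have hmem : ∀ n : ℕ, ∃ i : Fin k,
      ((((2 * n * N : ℕ) : ℤ) : ℝ), (((((2 * n * N : ℕ) : ℤ)^2) : ℤ) : ℝ)) ∈ P i ∧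
      (((2 * n * N : ℕ) : ℤ), ((2 * n * N : ℕ) : ℤ)^2) - lam i ∈ Λ i := by
    intro n
    have h1 : (((2 * n * N : ℕ) : ℤ), ((2 * n * N : ℕ) : ℤ)^2) ∈
        {q : ℤ × ℤ | ∃ s : ℕ, q = ((s : ℤ), (s : ℤ) ^ 2)} := ⟨2 * n * N, rfl⟩
    rw [hS, Set.mem_iUnion] at h1
    obtain ⟨i, hi1, hi2⟩ := h1
    exact ⟨i, by push_cast at hi1 ⊢; exact hi1, hi2⟩
  choose f hf1 hf2 using hmem
  obtain ⟨n₁, n₂, hne, hfe⟩ := Finite.exists_ne_map_eq_of_infinite f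
  set i := f n₁ with hi
  -- the two points on the parabola
  have h1P := hf1 n₁
  have h2P := hf1 n₂
  rw [← hfe] at h2P
  have h1L := hf2 n₁
  -- the midpoint
  set X : ℤ := ((n₁ : ℤ) + n₂) * N with hX
  set Y : ℤ := 2 * (N : ℤ)^2 * ((n₁ : ℤ)^2 + (n₂ : ℤ)^2) with hY
  have hmid : (X, Y) ∈ {q : ℤ × ℤ | ∃ s : ℕ, q = ((s : ℤ), (s : ℤ) ^ 2)} := by
    rw [hS, Set.mem_iUnion]
    refine ⟨i, ?_, ?_⟩
    · -- polyhedron membership by convexity (midpoint)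
      obtain ⟨m, a, b, hPi⟩ := hP i
      rw [hPi] at h1P h2P ⊢
      intro j
      have e1 := h1P j
      have e2 := h2P j
      simp only at e1 e2 ⊢
      have hx : (X : ℝ) = (((2 * n₁ * N : ℕ) : ℝ) + ((2 * n₂ * N : ℕ) : ℝ)) / 2 := by
        push_cast [hX]; ring
      have hy : (Y : ℝ) = ((((2 * n₁ * N : ℕ) : ℤ)^2 : ℤ) + (((2 * n₂ * N : ℕ) : ℤ)^2 : ℤ)) / 2 := by
        push_cast [hY]; ring
      rw [hx, hy]
      push_cast at e1 e2 ⊢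
      linarith
    · -- coset membership
      have hdiff : (X, Y) - (((2 * n₁ * N : ℕ) : ℤ), ((2 * n₁ * N : ℕ) : ℤ)^2) =
          (N : ℤ) • (((n₂ : ℤ) - n₁), 2 * N * ((n₂ : ℤ)^2 - (n₁ : ℤ)^2)) := by
        simp only [Prod.smul_mk, smul_eq_mul, Prod.mk_sub_mk, Prod.mk.injEq]
        constructor <;> push_cast <;> ring
      have : (X, Y) - lam i =
          ((X, Y) - (((2 * n₁ * N : ℕ) : ℤ), ((2 * n₁ * N : ℕ) : ℤ)^2)) +
          ((((2 * n₁ * N : ℕ) : ℤ), ((2 * n₁ * N : ℕ) : ℤ)^2) - lam i) := by ring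
      rw [this, hdiff]
      exact add_mem (hNmem i _) h1L
  -- but the midpoint is not on the parabola
  obtain ⟨s, hs⟩ := hmid
  have hX' : X = (s : ℤ) := congrArg Prod.fst hs
  have hY' : Y = (s : ℤ)^2 := congrArg Prod.snd hs
  have hYX : Y = X^2 := by rw [hX', hY']
  have hkey : (N : ℤ)^2 * ((n₁ : ℤ) - n₂)^2 = 0 := by
    have := hYX
    rw [hX, hY] at this
    nlinarith [this]
  have hNne : (N : ℤ) ≠ 0 := by exact_mod_cast hNpos.ne'
  have : ((n₁ : ℤ) - n₂) = 0 := by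
    rcases mul_eq_zero.mp hkey with h | h
    · exact absurd h (pow_ne_zero 2 hNne)
    · exact pow_eq_zero_iff two_ne_zero |>.mp h
  exact hne (by exact_mod_cast sub_eq_zero.mp this)
end
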